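/- arXiv:2602.14084 — 2 statements merged into one kernel-verified Lean document; each statement's English description precedes it below -/
import Mathlib

section
/- For all real numbers p, q, r with p, q, r each in the interval [0,1], the probability that the triangle is balanced satisfies min(p, 1-p) ≤ P_bal(p,q,r) ≤ max(p, 1-p). -/
/-- Probability that a triangle with positive-sign probabilities p, q, r is balanced. -/
def Pbal (p q r : ℝ) : ℝ :=
  p*q*r + p*(1-q)*(1-r) + (1-p)*q*(1-r) + (1-p)*(1-q)*r

/-- Probability that a triangle with positive-sign probabilities p, q, r is unbalanced. -/
def Punbal (p q r : ℝ) : ℝ :=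
  (1-p)*(1-q)*(1-r) + p*q*(1-r) + p*(1-q)*r + (1-p)*q*r

theorem bal_prob_range (p q r : ℝ)
    (hp : p ∈ Set.Icc (0:ℝ) 1) (hq : q ∈ Set.Icc (0:ℝ) 1) (hr : r ∈ Set.Icc (0:ℝ) 1) :
    min p (1 - p) ≤ Pbal p q r ∧ Pbal p q r ≤ max p (1 - p) := by
  obtain ⟨hp0, hp1⟩ := hp
  obtain ⟨hq0, hq1⟩ := hq
  obtain ⟨hr0, hr1⟩ := hr
  set A : ℝ := q*r + (1-q)*(1-r) with hA
  have hA0 : 0 ≤ A := by nlinarith [mul_nonneg hq0 hr0, mul_nonneg (sub_nonneg.2 hq1) (sub_nonneg.2 hr1)]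
  have hA1 : A ≤ 1 := by nlinarith
  have hP : Pbal p q r = p*A + (1-p)*(1-A) := by unfold Pbal; ring
  constructor
  · rcases min_cases p (1-p) with ⟨h, _⟩ | ⟨h, _⟩ <;> rw [h, hP] <;> nlinarith
  · rcases max_cases p (1-p) with ⟨h, _⟩ | ⟨h, _⟩ <;> rw [h, hP] <;> nlinarith
end

section
/- Let t be a real number with 1/2 ≤ t, and let p, q, r be real numbers in [0,1] with 1 - t < p < t. Then P_bal(p,q,r) < t and P_unbal(p,q,r) < t; that is, an edge whose positive-sign probability lies strictly between 1-t and t cannot belong to any uncertain balanced or uncertain unbalanced triangle at threshold t. -/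
theorem unclassified_edge_prunes (t p q r : ℝ) (ht : 1/2 ≤ t)
    (hp : p ∈ Set.Icc (0:ℝ) 1) (hq : q ∈ Set.Icc (0:ℝ) 1) (hr : r ∈ Set.Icc (0:ℝ) 1)
    (hlo : 1 - t < p) (hhi : p < t) :
    Pbal p q r < t ∧ Punbal p q r < t := by
  obtain ⟨hq0, hq1⟩ := hq
  obtain ⟨hr0, hr1⟩ := hr
  have hs0 : 0 ≤ q*r + (1-q)*(1-r) :=
    add_nonneg (mul_nonneg hq0 hr0) (mul_nonneg (by linarith) (by linarith))
  have hs1 : q*r + (1-q)*(1-r) ≤ 1 := by nlinarith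
  rcases le_total p (1/2) with h | h
  · have h1 := mul_nonneg hs0 (by linarith : (0:ℝ) ≤ 1 - 2*p)
    have h2 := mul_nonneg (by linarith : (0:ℝ) ≤ 1 - (q*r + (1-q)*(1-r)))
      (by linarith : (0:ℝ) ≤ 1 - 2*p)
    constructor <;> [unfold Pbal; unfold Punbal] <;> nlinarith
  · have h1 := mul_nonneg hs0 (by linarith : (0:ℝ) ≤ 2*p - 1)
    have h2 := mul_nonneg (by linarith : (0:ℝ) ≤ 1 - (q*r + (1-q)*(1-r)))
      (by linarith : (0:ℝ) ≤ 2*p - 1)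
    constructor <;> [unfold Pbal; unfold Punbal] <;> nlinarith
end
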